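/- For real s > −2, the double integral ∬_{[0,1]²} ((1−x)/(1−xy)) (−ln(xy))^s dx dy equals Γ(s+2)·(ζ(s+2) − 1/(s+1)) for s ≠ −1, where ζ denotes the analytically continued Riemann zeta function and Γ the Gamma function. (Hadjicostas's formula; for s = −1 the right side is interpreted by the limit, giving γ.) -/

import Mathlib

open MeasureTheory Set Complex Filter Asymptotics

noncomputable def hadPhi (t : ℝ) : ℝ := (t - 1 + Real.exp (-t)) / (Real.exp t - 1)
noncomputable def hadF : ℝ → ℂ := fun t => ((hadPhi t : ℝ) : ℂ)

lemma had_den_pos {t : ℝ} (ht : 0 < t) : 0 < Real.exp t - 1 := by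
  have h := Real.add_one_le_exp t; linarith

lemma hadPhi_nonneg {t : ℝ} (ht : 0 < t) : 0 ≤ hadPhi t := by
  have h2 : 0 ≤ t - 1 + Real.exp (-t) := by
    have := Real.add_one_le_exp (-t); linarith
  exact div_nonneg h2 (had_den_pos ht).le

lemma hadPhi_le_of_le_one {t : ℝ} (ht : 0 < t) (ht1 : t ≤ 1) : hadPhi t ≤ t := by
  have hd : t ≤ Real.exp t - 1 := by have := Real.add_one_le_exp t; linarith
  have hnum : t - 1 + Real.exp (-t) ≤ t ^ 2 := by
    have := Real.abs_exp_sub_one_sub_id_le (x := -t) (by rw [abs_neg, abs_of_pos ht]; exact ht1)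
    rw [abs_le] at this
    nlinarith [this.2]
  rw [hadPhi, div_le_iff₀ (by linarith)]
  nlinarith

lemma hadPhi_le_of_one_le {t : ℝ} (ht : 1 ≤ t) : hadPhi t ≤ 2 * Real.exp (-t / 2) := by
  have h0 : (0:ℝ) < t := by linarith
  have hden := had_den_pos h0
  have hexp : Real.exp t - 1 ≥ Real.exp t / 2 := by
    have h2 : (2:ℝ) ≤ Real.exp 1 := by have := Real.add_one_le_exp 1; linarith
    have := Real.exp_le_exp.mpr ht
    linarith
  have hnum : t - 1 + Real.exp (-t) ≤ t := by
    have : Real.exp (-t) ≤ 1 := Real.exp_le_one_iff.mpr (by linarith)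
    linarith
  have htle : t ≤ Real.exp (t/2) := by
    have h4 := Real.add_one_le_exp (t/4)
    have hsq : (1 + t/4)^2 ≤ (Real.exp (t/4))^2 := by nlinarith
    have hee : (Real.exp (t/4))^2 = Real.exp (t/2) := by
      rw [sq, ← Real.exp_add]; congr 1; ring
    nlinarith [sq_nonneg (1 - t/4)]
  have key : Real.exp (-t/2) * Real.exp t = Real.exp (t/2) := by
    rw [← Real.exp_add]; congr 1; ring
  rw [hadPhi, div_le_iff₀ hden]
  nlinarith [Real.exp_pos (-t/2)]

lemma hadF_continuousOn : ContinuousOn hadF (Ioi 0) := by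
  apply Complex.continuous_ofReal.comp_continuousOn
  apply ContinuousOn.div
  · fun_prop
  · fun_prop
  · intro t ht; exact (had_den_pos ht).ne'

lemma hadF_locInt : LocallyIntegrableOn hadF (Ioi 0) := by
  exact hadF_continuousOn.locallyIntegrableOn measurableSet_Ioi

lemma hadF_norm {t : ℝ} (ht : 0 < t) : ‖hadF t‖ = hadPhi t := by
  rw [hadF, Complex.norm_real, Real.norm_eq_abs, _root_.abs_of_nonneg (hadPhi_nonneg ht)]

lemma hadF_top : hadF =O[atTop] fun t => Real.exp (-(1/2) * t) := by
  rw [Asymptotics.isBigO_iff]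
  refine ⟨2, ?_⟩
  filter_upwards [Filter.eventually_ge_atTop 1] with t ht
  rw [hadF_norm (by linarith)]
  have := hadPhi_le_of_one_le ht
  rw [Real.norm_eq_abs, abs_of_pos (Real.exp_pos _)]
  calc hadPhi t ≤ 2 * Real.exp (-t/2) := this
    _ = 2 * Real.exp (-(1/2) * t) := by congr 1; ring_nf

lemma hadF_bot : hadF =O[nhdsWithin 0 (Ioi 0)] fun t => t ^ (-(-1) : ℝ) := by
  rw [Asymptotics.isBigO_iff]
  refine ⟨1, ?_⟩
  filter_upwards [Ioc_mem_nhdsGT_of_mem (by norm_num : (0:ℝ) ∈ Ico 0 1)] with t ht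
  rw [hadF_norm ht.1]
  have h := hadPhi_le_of_le_one ht.1 ht.2
  rw [one_mul, Real.norm_eq_abs, neg_neg, Real.rpow_one, abs_of_pos ht.1]
  exact h

lemma had_mellin_diff {w : ℂ} (hw : 0 < w.re) :
    DifferentiableAt ℂ (fun z => mellin hadF (z - 1)) w := by
  have h1 : DifferentiableAt ℂ (mellin hadF) (w - 1) := by
    apply mellin_differentiableAt_of_isBigO_rpow_exp (a := 1/2) (b := -1)
      (by norm_num) hadF_locInt hadF_top hadF_bot
    simp only [Complex.sub_re, Complex.one_re]
    linarith
  exact h1.comp (f := fun z : ℂ => z - 1) w ((differentiable_id.sub_const (1:ℂ)) w)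

noncomputable def hadG0 : ℝ → ℂ := fun t => ((1 / (Real.exp t - 1) : ℝ) : ℂ)
noncomputable def hadG1 : ℝ → ℂ := fun t => ((t / (Real.exp t - 1) : ℝ) : ℂ)

lemma had_mellin_g0 {w : ℂ} (hw : 1 < w.re) :
    mellin hadG0 w = Complex.Gamma w * riemannZeta w := by
  have hw0 : 0 < w.re := by linarith
  have key := hasSum_mellin (ι := ℕ) (a := fun _ => (1:ℂ)) (p := fun n => (n:ℝ)+1)
    (F := hadG0) (fun i => Or.inr (by positivity)) hw0 ?_ ?_
  · have h2 := key.tsum_eq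
    rw [← h2]
    have : ∀ n : ℕ, Complex.Gamma w * (1:ℂ) / (((n:ℝ)+1 : ℝ) : ℂ) ^ w
        = Complex.Gamma w * (1 / ((n:ℂ)+1) ^ w) := by
      intro n; push_cast; rw [mul_one, mul_one_div]
    rw [tsum_congr this, tsum_mul_left, zeta_eq_tsum_one_div_nat_add_one_cpow hw]
  · -- HasSum
    intro t ht
    have ht' : (0:ℝ) < t := ht
    set r := Real.exp (-t) with hr
    have hr0 : 0 ≤ r := (Real.exp_pos _).le
    have hr1 : r < 1 := Real.exp_lt_one_iff.mpr (by linarith)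
    have hgeo := (hasSum_geometric_of_lt_one hr0 hr1).mul_left r
    have hre : ∀ n : ℕ, r * r ^ n = Real.exp (-((n:ℝ)+1) * t) := by
      intro n
      rw [show (-((n:ℝ)+1) * t) = ((n+1 : ℕ) : ℝ) * (-t) by push_cast; ring,
        Real.exp_nat_mul, pow_succ, hr, mul_comm]
    have hval : r * (1 - r)⁻¹ = 1 / (Real.exp t - 1) := by
      rw [hr, Real.exp_neg]
      have he1 : (1:ℝ) < Real.exp t := by
        rw [← Real.exp_zero]; exact Real.exp_lt_exp.mpr ht'
      have hne : Real.exp t ≠ 0 := (Real.exp_pos t).ne'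
      field_simp
    simp only [hadG0]
    rw [← hval]
    have : HasSum (fun n : ℕ => Real.exp (-((n:ℝ)+1) * t)) (r * (1-r)⁻¹) := by
      refine hgeo.congr_fun ?_
      intro n; rw [hre n]
    have := Complex.hasSum_ofReal.mpr this
    refine this.congr_fun ?_
    intro n; rw [one_mul]
  · -- Summable
    simp only [norm_one]
    have h1 : Summable fun n : ℕ => 1 / (n:ℝ) ^ w.re :=
      Real.summable_one_div_nat_rpow.mpr hw
    have h2 := (summable_nat_add_iff 1).mpr h1
    refine h2.congr ?_
    intro n; push_cast; ring

lemma had_mellin_exp {z : ℂ} (hz : 0 < z.re) :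
    mellin (fun t : ℝ => ((Real.exp (-t) : ℝ) : ℂ)) z = Complex.Gamma z := by
  rw [Complex.Gamma_eq_integral hz, Complex.GammaIntegral, mellin]
  refine setIntegral_congr_fun measurableSet_Ioi (fun t ht => ?_)
  rw [smul_eq_mul, mul_comm]

lemma had_conv_exp {z : ℂ} (hz : 0 < z.re) :
    MellinConvergent (fun t : ℝ => ((Real.exp (-t) : ℝ) : ℂ)) z := by
  have h := Complex.GammaIntegral_convergent hz
  exact h.congr_fun (fun t ht => by rw [smul_eq_mul, mul_comm]) measurableSet_Ioi

lemma hadG1_locInt : LocallyIntegrableOn hadG1 (Ioi 0) := by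
  refine (Complex.continuous_ofReal.comp_continuousOn ?_).locallyIntegrableOn measurableSet_Ioi
  apply ContinuousOn.div
  · fun_prop
  · fun_prop
  · intro t ht; exact (had_den_pos ht).ne'

lemma hadG1_nonneg {t : ℝ} (ht : 0 < t) : 0 ≤ t / (Real.exp t - 1) :=
  div_nonneg ht.le (had_den_pos ht).le

lemma hadG1_top : hadG1 =O[atTop] fun t => Real.exp (-(1/2) * t) := by
  rw [Asymptotics.isBigO_iff]
  refine ⟨2, ?_⟩
  filter_upwards [Filter.eventually_ge_atTop 1] with t ht
  have h0 : (0:ℝ) < t := by linarith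
  have hden := had_den_pos h0
  rw [hadG1, Complex.norm_real, Real.norm_eq_abs, _root_.abs_of_nonneg (hadG1_nonneg h0),
    Real.norm_eq_abs, _root_.abs_of_pos (Real.exp_pos _)]
  have hexp : Real.exp t - 1 ≥ Real.exp t / 2 := by
    have h2 : (2:ℝ) ≤ Real.exp 1 := by have := Real.add_one_le_exp 1; linarith
    have := Real.exp_le_exp.mpr ht
    linarith
  have htle : t ≤ Real.exp (t/2) := by
    have h4 := Real.add_one_le_exp (t/4)
    have hsq : (1 + t/4)^2 ≤ (Real.exp (t/4))^2 := by nlinarith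
    have hee : (Real.exp (t/4))^2 = Real.exp (t/2) := by
      rw [sq, ← Real.exp_add]; congr 1; ring
    nlinarith [sq_nonneg (1 - t/4)]
  have key : Real.exp (-(1/2) * t) * Real.exp t = Real.exp (t/2) := by
    rw [← Real.exp_add]; congr 1; ring
  rw [div_le_iff₀ hden]
  nlinarith [Real.exp_pos (-(1/2) * t)]

lemma hadG1_bot : hadG1 =O[nhdsWithin 0 (Ioi 0)] fun t => t ^ (-(0:ℝ)) := by
  rw [Asymptotics.isBigO_iff]
  refine ⟨1, ?_⟩
  filter_upwards [self_mem_nhdsWithin] with t ht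
  have ht' : (0:ℝ) < t := ht
  rw [hadG1, Complex.norm_real, Real.norm_eq_abs, _root_.abs_of_nonneg (hadG1_nonneg ht'),
    neg_zero, Real.rpow_zero, Real.norm_eq_abs, abs_one, mul_one]
  rw [div_le_one (had_den_pos ht')]
  have := Real.add_one_le_exp t; linarith

lemma mellin_hadF_eq {w : ℂ} (hw : 1 < w.re) :
    mellin hadF (w - 1) = Complex.Gamma w * (riemannZeta w - 1 / (w - 1)) := by
  have hw0 : 0 < (w - 1).re := by simp only [Complex.sub_re, Complex.one_re]; linarith
  have hwne : w - 1 ≠ 0 := by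
    intro h; rw [h] at hw0; simp at hw0
  have hconv1 : MellinConvergent hadG1 (w - 1) :=
    mellinConvergent_of_isBigO_rpow_exp (by norm_num : (0:ℝ) < 1/2) hadG1_locInt hadG1_top
      hadG1_bot (by simpa using hw0)
  have hconv2 : MellinConvergent (fun t : ℝ => ((Real.exp (-t) : ℝ) : ℂ)) (w - 1) :=
    had_conv_exp hw0
  have step1 : mellin hadF (w - 1)
      = mellin hadG1 (w - 1) - mellin (fun t : ℝ => ((Real.exp (-t) : ℝ) : ℂ)) (w - 1) := by
    rw [mellin, mellin, mellin, ← integral_sub hconv1 hconv2]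
    refine setIntegral_congr_fun measurableSet_Ioi (fun t ht => ?_)
    have ht' : (0:ℝ) < t := ht
    rw [← smul_sub]
    congr 1
    have hre : hadPhi t = t / (Real.exp t - 1) - Real.exp (-t) := by
      rw [hadPhi, Real.exp_neg, eq_sub_iff_add_eq, div_add' _ _ _ (had_den_pos ht').ne',
        div_eq_div_iff (had_den_pos ht').ne' (had_den_pos ht').ne']
      have hne : Real.exp t ≠ 0 := (Real.exp_pos t).ne'
      field_simp
      ring
    rw [hadF, hre, hadG1]
    push_cast
    ring
  have step2 : mellin hadG1 (w - 1) = mellin hadG0 w := by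
    have h := mellin_cpow_smul hadG0 (w - 1) 1
    have hfun : (fun t : ℝ => (t:ℂ) ^ (1:ℂ) • hadG0 t) = hadG1 := by
      funext t
      rw [Complex.cpow_one, smul_eq_mul, hadG0, hadG1]
      push_cast
      rw [mul_one_div]
    rw [hfun] at h
    rw [h, sub_add_cancel]
  have step3 := had_mellin_g0 hw
  have step4 : mellin (fun t : ℝ => ((Real.exp (-t) : ℝ) : ℂ)) (w - 1)
      = Complex.Gamma w / (w - 1) := by
    rw [had_mellin_exp hw0, eq_div_iff hwne, mul_comm, ← Complex.Gamma_add_one _ hwne,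
      sub_add_cancel]
  rw [step1, step2, step3, step4]
  field_simp

lemma had_U_preconnected :
    IsPreconnected {w : ℂ | 0 < w.re ∧ w ≠ 1} := by
  have hA1 : Convex ℝ {w : ℂ | 0 < w.re ∧ 0 < w.im} :=
    (convex_halfSpace_re_gt 0).inter (convex_halfSpace_im_gt 0)
  have hA2 : Convex ℝ {w : ℂ | 0 < w.re ∧ w.im < 0} :=
    (convex_halfSpace_re_gt 0).inter (convex_halfSpace_im_lt 0)
  have hA3 : Convex ℝ {w : ℂ | 0 < w.re ∧ w.re < 1} :=
    (convex_halfSpace_re_gt 0).inter (convex_halfSpace_re_lt 1)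
  have hA4 : Convex ℝ {w : ℂ | 1 < w.re} := convex_halfSpace_re_gt 1
  have hS1 : IsPreconnected ({w : ℂ | 0 < w.re ∧ w.re < 1} ∪ {w : ℂ | 0 < w.re ∧ 0 < w.im}) := by
    apply IsPreconnected.union (Complex.mk (1/2) (1/2))
    · constructor <;> norm_num
    · constructor <;> norm_num
    · exact hA3.isPreconnected
    · exact hA1.isPreconnected
  have hS2 : IsPreconnected (({w : ℂ | 0 < w.re ∧ w.re < 1} ∪ {w : ℂ | 0 < w.re ∧ 0 < w.im})
      ∪ {w : ℂ | 0 < w.re ∧ w.im < 0}) := by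
    apply IsPreconnected.union (Complex.mk (1/2) (-1/2))
    · left; constructor <;> norm_num
    · constructor <;> norm_num
    · exact hS1
    · exact hA2.isPreconnected
  have hS3 : IsPreconnected ((({w : ℂ | 0 < w.re ∧ w.re < 1} ∪ {w : ℂ | 0 < w.re ∧ 0 < w.im})
      ∪ {w : ℂ | 0 < w.re ∧ w.im < 0}) ∪ {w : ℂ | 1 < w.re}) := by
    apply IsPreconnected.union (Complex.mk 2 1)
    · left; right; constructor <;> norm_num
    · norm_num
    · exact hS2
    · exact hA4.isPreconnected
  have hset : {w : ℂ | 0 < w.re ∧ w ≠ 1}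
      = (({w : ℂ | 0 < w.re ∧ w.re < 1} ∪ {w : ℂ | 0 < w.re ∧ 0 < w.im})
      ∪ {w : ℂ | 0 < w.re ∧ w.im < 0}) ∪ {w : ℂ | 1 < w.re} := by
    ext w
    simp only [Set.mem_setOf_eq, Set.mem_union]
    constructor
    · rintro ⟨hre, hne⟩
      rcases lt_trichotomy w.im 0 with him | him | him
      · exact Or.inl (Or.inr ⟨hre, him⟩)
      · rcases lt_trichotomy w.re 1 with h1 | h1 | h1
        · exact Or.inl (Or.inl (Or.inl ⟨hre, h1⟩))
        · exact absurd (Complex.ext h1 (by simpa using him)) hne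
        · exact Or.inr h1
      · exact Or.inl (Or.inl (Or.inr ⟨hre, him⟩))
    · rintro (((⟨h1, h2⟩ | ⟨h1, h2⟩) | ⟨h1, h2⟩) | h1)
      · exact ⟨h1, fun h => by rw [h] at h2; simp at h2⟩
      · exact ⟨h1, fun h => by rw [h] at h2; simp at h2⟩
      · exact ⟨h1, fun h => by rw [h] at h2; simp at h2⟩
      · refine ⟨by linarith, fun h => by rw [h] at h1; simp at h1⟩
  rw [hset]
  exact hS3

lemma had_key {w : ℂ} (hw : 0 < w.re) (hw1 : w ≠ 1) :
    mellin hadF (w - 1) = Complex.Gamma w * (riemannZeta w - 1 / (w - 1)) := by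
  set U : Set ℂ := {w : ℂ | 0 < w.re ∧ w ≠ 1} with hU
  have hopen : IsOpen U := by
    have : U = (Complex.re ⁻¹' (Set.Ioi 0)) ∩ {(1:ℂ)}ᶜ := by
      ext z; simp [hU, Set.mem_setOf_eq, and_comm]
    rw [this]
    exact (isOpen_Ioi.preimage Complex.continuous_re).inter isOpen_compl_singleton
  have hGanal : AnalyticOnNhd ℂ (fun z => mellin hadF (z - 1)) U := by
    apply DifferentiableOn.analyticOnNhd _ hopen
    intro z hz
    exact (had_mellin_diff hz.1).differentiableWithinAt
  have hRanal : AnalyticOnNhd ℂ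
      (fun z => Complex.Gamma z * (riemannZeta z - 1 / (z - 1))) U := by
    apply DifferentiableOn.analyticOnNhd _ hopen
    intro z hz
    apply DifferentiableAt.differentiableWithinAt
    have hzne : z - 1 ≠ 0 := sub_ne_zero.mpr hz.2
    have hG : DifferentiableAt ℂ Complex.Gamma z := by
      apply Complex.differentiableAt_Gamma
      intro m hm
      have : z.re = -(m:ℝ) := by rw [hm]; simp
      have : (0:ℝ) < -(m:ℝ) := this ▸ hz.1
      have : (0:ℝ) ≤ (m:ℝ) := Nat.cast_nonneg m
      linarith
    exact hG.mul ((differentiableAt_riemannZeta hz.2).sub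
      ((differentiableAt_const 1).div (differentiableAt_id.sub_const 1) hzne))
  have heq : (fun z => mellin hadF (z - 1)) =ᶠ[nhds 2]
      (fun z => Complex.Gamma z * (riemannZeta z - 1 / (z - 1))) := by
    have hmem : {z : ℂ | 1 < z.re} ∈ nhds (2:ℂ) := by
      apply (isOpen_lt continuous_const Complex.continuous_re).mem_nhds
      norm_num
    filter_upwards [hmem] with z hz
    exact mellin_hadF_eq hz
  have h2U : (2:ℂ) ∈ U := by
    constructor
    · norm_num
    · intro h
      have := congrArg Complex.re h
      norm_num at this
  exact hGanal.eqOn_of_preconnected_of_eventuallyEq hRanal had_U_preconnected h2U heq ⟨hw, hw1⟩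

lemma had_L2 (s : ℝ) :
    ((∫ v in Set.Ioi (0:ℝ), v ^ s * hadPhi v : ℝ) : ℂ) = mellin hadF ((s:ℂ) + 1) := by
  rw [mellin, show (s:ℂ) + 1 - 1 = (s:ℂ) by ring]
  refine (integral_ofReal (𝕜 := ℂ)).symm.trans ?_
  refine setIntegral_congr_fun measurableSet_Ioi (fun t ht => ?_)
  have ht' : (0:ℝ) < t := ht
  rw [smul_eq_mul, hadF, ← Complex.ofReal_cpow ht'.le, ← Complex.ofReal_mul]
  rfl

-- (a) substitution x = exp (-t)
lemma had_subst (g : ℝ → ℝ) :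
    ∫ x in Ioo (0:ℝ) 1, g x = ∫ t in Ioi (0:ℝ), Real.exp (-t) * g (Real.exp (-t)) := by
  have himg : (fun t : ℝ => Real.exp (-t)) '' Ioi 0 = Ioo 0 1 := by
    ext x
    simp only [mem_image, mem_Ioi, mem_Ioo]
    constructor
    · rintro ⟨t, ht, rfl⟩
      exact ⟨Real.exp_pos _, Real.exp_lt_one_iff.mpr (by linarith)⟩
    · rintro ⟨h0, h1⟩
      exact ⟨-Real.log x, by simpa using Real.log_neg h0 h1, by rw [neg_neg, Real.exp_log h0]⟩
  have hderiv : ∀ t ∈ Ioi (0:ℝ),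
      HasDerivWithinAt (fun t : ℝ => Real.exp (-t)) (-Real.exp (-t)) (Ioi 0) t := by
    intro t _
    have : HasDerivAt (fun u : ℝ => Real.exp (-u)) (-Real.exp (-t)) t := by
      exact ((Real.hasDerivAt_exp (-t)).comp t (hasDerivAt_neg t)).congr_deriv (by ring)
    exact this.hasDerivWithinAt
  have hinj : InjOn (fun t : ℝ => Real.exp (-t)) (Ioi 0) :=
    (Real.exp_injective.comp neg_injective).injOn
  have := integral_image_eq_integral_abs_deriv_smul measurableSet_Ioi hderiv hinj g
  rw [himg] at this
  rw [this]
  refine setIntegral_congr_fun measurableSet_Ioi (fun t _ => ?_)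
  rw [abs_neg, Real.abs_exp, smul_eq_mul]

-- (b) translation
lemma had_transl (g : ℝ → ℝ) (t : ℝ) :
    ∫ u in Ioi (0:ℝ), g (t + u) = ∫ v in Ioi t, g v := by
  have himg : (fun u : ℝ => t + u) '' Ioi 0 = Ioi t := by
    rw [image_const_add_Ioi]; norm_num
  have hderiv : ∀ u ∈ Ioi (0:ℝ),
      HasDerivWithinAt (fun u : ℝ => t + u) ((fun _ : ℝ => (1:ℝ)) u) (Ioi 0) u :=
    fun u _ => ((hasDerivAt_id u).const_add t).hasDerivWithinAt
  have hinj : InjOn (fun u : ℝ => t + u) (Ioi 0) := (add_right_injective t).injOn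
  have := integral_image_eq_integral_abs_deriv_smul measurableSet_Ioi hderiv hinj g
  rw [himg] at this
  rw [this]
  refine setIntegral_congr_fun measurableSet_Ioi (fun u _ => ?_)
  norm_num

-- (c) FTC
lemma had_ftc (v : ℝ) (hv : 0 ≤ v) :
    ∫ t in Ioo (0:ℝ) v, (1 - Real.exp (-t)) = v - 1 + Real.exp (-v) := by
  rw [← integral_Ioc_eq_integral_Ioo, ← intervalIntegral.integral_of_le hv]
  have h1 : ∫ t in (0:ℝ)..v, (1 - Real.exp (-t))
      = (∫ _ in (0:ℝ)..v, (1:ℝ)) - ∫ t in (0:ℝ)..v, Real.exp (-t) := by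
    apply intervalIntegral.integral_sub
    · exact intervalIntegrable_const
    · exact (Real.continuous_exp.comp continuous_neg).intervalIntegrable 0 v
  have h2 : ∫ t in (0:ℝ)..v, Real.exp (-t) = 1 - Real.exp (-v) := by
    rw [intervalIntegral.integral_comp_neg Real.exp, integral_exp]
    simp
  rw [h1, h2]
  simp
  ring


noncomputable def hadH (s : ℝ) (v : ℝ) : ℝ := v ^ s * (Real.exp (-v) / (1 - Real.exp (-v)))

noncomputable def hadQ (s : ℝ) (p : ℝ × ℝ) : ℝ :=
  if 0 < p.1 ∧ p.1 < p.2 then (1 - Real.exp (-p.1)) * hadH s p.2 else 0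

lemma had_one_sub_exp_pos {t : ℝ} (ht : 0 < t) : 0 < 1 - Real.exp (-t) := by
  have : Real.exp (-t) < 1 := Real.exp_lt_one_iff.mpr (by linarith)
  linarith

lemma hadH_nonneg {s v : ℝ} (hv : 0 < v) : 0 ≤ hadH s v := by
  apply mul_nonneg (Real.rpow_nonneg hv.le s)
  exact div_nonneg (Real.exp_pos _).le (had_one_sub_exp_pos hv).le

lemma hadH_identity {s v : ℝ} (hv : 0 < v) :
    hadH s v * (v - 1 + Real.exp (-v)) = v ^ s * hadPhi v := by
  rw [hadH, hadPhi]
  have h1 : (0:ℝ) < 1 - Real.exp (-v) := had_one_sub_exp_pos hv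
  have h2 : (0:ℝ) < Real.exp v - 1 := by
    have := Real.add_one_le_exp v; nlinarith [Real.exp_pos v]
  have key : Real.exp (-v) / (1 - Real.exp (-v)) = 1 / (Real.exp v - 1) := by
    have hne : Real.exp v ≠ 0 := (Real.exp_pos v).ne'
    rw [Real.exp_neg] at h1 ⊢
    rw [div_eq_div_iff h1.ne' h2.ne']
    field_simp
  rw [key]
  ring

lemma hadQ_nonneg (s : ℝ) (p : ℝ × ℝ) : 0 ≤ hadQ s p := by
  rw [hadQ]
  split_ifs with h
  · exact mul_nonneg (had_one_sub_exp_pos h.1).le (hadH_nonneg (h.1.trans h.2))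
  · exact le_refl _

lemma hadQ_measurable (s : ℝ) : Measurable (hadQ s) := by
  unfold hadQ hadH
  apply Measurable.ite
  · exact (measurableSet_lt measurable_const measurable_fst).inter
      (measurableSet_lt measurable_fst measurable_snd)
  · fun_prop
  · fun_prop

lemma had_inner_t (s v : ℝ) (hv : 0 < v) :
    (fun t => ENNReal.ofReal (hadQ s (t, v)))
      = indicator (Ioo 0 v) (fun t => ENNReal.ofReal ((1 - Real.exp (-t)) * hadH s v)) := by
  funext t
  rw [hadQ]
  by_cases h : 0 < t ∧ t < v
  · rw [if_pos h, indicator_of_mem (mem_Ioo.mpr h)]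
  · rw [if_neg h, indicator_of_notMem (by simpa [mem_Ioo] using h)]
    simp

lemma had_t_int (s v : ℝ) (hv : 0 < v) :
    IntegrableOn (fun t => (1 - Real.exp (-t)) * hadH s v) (Ioo 0 v) := by
  have hc : Continuous (fun t : ℝ => (1 - Real.exp (-t)) * hadH s v) := by
    unfold hadH; fun_prop
  exact (intervalIntegrable_iff_integrableOn_Ioo_of_le hv.le).mp (hc.intervalIntegrable 0 v)

lemma had_t_integral (s v : ℝ) (hv : 0 < v) :
    ∫ t in Ioo (0:ℝ) v, (1 - Real.exp (-t)) * hadH s v = v ^ s * hadPhi v := by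
  rw [integral_mul_const, had_ftc v hv.le, mul_comm, hadH_identity hv]

lemma had_t_lintegral (s v : ℝ) :
    (∫⁻ t, ENNReal.ofReal (hadQ s (t, v)))
      = indicator (Ioi 0) (fun v => ENNReal.ofReal (v ^ s * hadPhi v)) v := by
  by_cases hv : 0 < v
  · rw [indicator_of_mem (show v ∈ Ioi 0 from hv)]
    simp_rw [had_inner_t s v hv]
    rw [lintegral_indicator measurableSet_Ioo]
    rw [← ofReal_integral_eq_lintegral_ofReal (had_t_int s v hv)
      (ae_restrict_of_forall_mem measurableSet_Ioo (fun t ht =>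
        mul_nonneg (had_one_sub_exp_pos ht.1).le (hadH_nonneg hv)))]
    rw [had_t_integral s v hv]
  · rw [indicator_of_notMem (show v ∉ Ioi 0 from hv)]
    have hz : ∀ t, hadQ s (t, v) = 0 := by
      intro t
      rw [hadQ, if_neg]
      rintro ⟨h1, h2⟩
      exact hv (h1.trans h2)
    simp [hz]

lemma had_finite (s : ℝ) (hs : -2 < s) :
    ∫⁻ v in Ioi (0:ℝ), ENNReal.ofReal (v ^ s * hadPhi v) < ⊤ := by
  rw [show Ioi (0:ℝ) = Ioc 0 1 ∪ Ioi 1 from (Ioc_union_Ioi_eq_Ioi zero_le_one).symm,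
    lintegral_union measurableSet_Ioi (Ioc_disjoint_Ioi le_rfl)]
  apply ENNReal.add_lt_top.mpr
  constructor
  · -- on Ioc 0 1
    have hmono : ∫⁻ v in Ioc (0:ℝ) 1, ENNReal.ofReal (v ^ s * hadPhi v)
        ≤ ∫⁻ v in Ioc (0:ℝ) 1, ENNReal.ofReal (v ^ (s+1)) := by
      apply setLIntegral_mono (by fun_prop)
      intro v hv
      apply ENNReal.ofReal_le_ofReal
      calc v ^ s * hadPhi v ≤ v ^ s * v :=
            mul_le_mul_of_nonneg_left (hadPhi_le_of_le_one hv.1 hv.2)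
              (Real.rpow_nonneg hv.1.le s)
        _ = v ^ (s+1) := by rw [Real.rpow_add_one hv.1.ne']
    refine hmono.trans_lt ?_
    have hint : IntegrableOn (fun v : ℝ => v ^ (s+1)) (Ioc 0 1) := by
      have := intervalIntegral.intervalIntegrable_rpow' (a := 0) (b := 1)
        (show (-1:ℝ) < s + 1 by linarith)
      rw [intervalIntegrable_iff_integrableOn_Ioc_of_le (by norm_num)] at this
      exact this
    rw [← hasFiniteIntegral_iff_ofReal (ae_restrict_of_forall_mem measurableSet_Ioc
      (fun v hv => Real.rpow_nonneg hv.1.le _))]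
    exact hint.2
  · -- on Ioi 1
    have hmono : ∫⁻ v in Ioi (1:ℝ), ENNReal.ofReal (v ^ s * hadPhi v)
        ≤ ∫⁻ v in Ioi (1:ℝ), ENNReal.ofReal (2 * (Real.exp (-v) * v ^ (s+1))) := by
      apply setLIntegral_mono (by fun_prop)
      intro v hv
      apply ENNReal.ofReal_le_ofReal
      have hv1 : (1:ℝ) ≤ v := le_of_lt hv
      have hv0 : (0:ℝ) < v := by linarith
      have hden := had_den_pos hv0
      have hphile : hadPhi v ≤ 2 * v * Real.exp (-v) := by
        have hnum : v - 1 + Real.exp (-v) ≤ v := by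
          have : Real.exp (-v) ≤ 1 := Real.exp_le_one_iff.mpr (by linarith)
          linarith
        have hexp2 : Real.exp v - 1 ≥ Real.exp v / 2 := by
          have h2 : (2:ℝ) ≤ Real.exp 1 := by have := Real.add_one_le_exp 1; linarith
          have := Real.exp_le_exp.mpr hv1
          linarith
        rw [hadPhi, div_le_iff₀ hden]
        have key : Real.exp (-v) * Real.exp v = 1 := by
          rw [← Real.exp_add]; simp
        have hE1 : Real.exp (-v) ≤ 1 := Real.exp_le_one_iff.mpr (by linarith)
        have hEv : Real.exp (-v) * (v + 1) ≤ 1 := by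
          have h1 := Real.add_one_le_exp v
          have := mul_le_mul_of_nonneg_left h1 (Real.exp_pos (-v)).le
          calc Real.exp (-v) * (v + 1) ≤ Real.exp (-v) * Real.exp v := this
            _ = 1 := key
        have heq : 2 * v * Real.exp (-v) * (Real.exp v - 1)
            = 2 * v - 2 * v * Real.exp (-v) := by linear_combination (2*v) * key
        have hvE : v * Real.exp (-v) ≤ v * 1 := mul_le_mul_of_nonneg_left hE1 hv0.le
        nlinarith [hEv, hvE, heq]
      calc v ^ s * hadPhi v ≤ v ^ s * (2 * v * Real.exp (-v)) :=
            mul_le_mul_of_nonneg_left hphile (Real.rpow_nonneg hv0.le s)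
        _ = 2 * (Real.exp (-v) * v ^ (s+1)) := by
            rw [Real.rpow_add_one hv0.ne']; ring
    refine hmono.trans_lt ?_
    have hint : IntegrableOn (fun v : ℝ => 2 * (Real.exp (-v) * v ^ (s+1))) (Ioi 1) := by
      have h := Real.GammaIntegral_convergent (show (0:ℝ) < s + 2 by linarith)
      rw [show s + 2 - 1 = s + 1 by ring] at h
      exact (h.mono_set (Ioi_subset_Ioi zero_le_one)).const_mul 2
    rw [← hasFiniteIntegral_iff_ofReal (ae_restrict_of_forall_mem measurableSet_Ioi
      (fun v hv => mul_nonneg (by norm_num) (mul_nonneg (Real.exp_pos _).le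
        (Real.rpow_nonneg (by linarith [mem_Ioi.mp hv]) _))))]
    exact hint.2

lemma hadQ_lintegral (s : ℝ) :
    ∫⁻ p : ℝ × ℝ, ENNReal.ofReal (hadQ s p)
      = ∫⁻ v in Ioi (0:ℝ), ENNReal.ofReal (v ^ s * hadPhi v) := by
  rw [MeasureTheory.Measure.volume_eq_prod,
    lintegral_prod_symm _ (((hadQ_measurable s).ennreal_ofReal).aemeasurable)]
  calc ∫⁻ v, ∫⁻ t, ENNReal.ofReal (hadQ s (t, v))
      = ∫⁻ v, indicator (Ioi 0) (fun v => ENNReal.ofReal (v ^ s * hadPhi v)) v := by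
        apply lintegral_congr
        intro v
        exact had_t_lintegral s v
    _ = ∫⁻ v in Ioi (0:ℝ), ENNReal.ofReal (v ^ s * hadPhi v) := by
        rw [lintegral_indicator measurableSet_Ioi]

lemma hadQ_integrable (s : ℝ) (hs : -2 < s) : Integrable (hadQ s) := by
  refine ⟨(hadQ_measurable s).aestronglyMeasurable, ?_⟩
  rw [hasFiniteIntegral_iff_ofReal (Filter.Eventually.of_forall (hadQ_nonneg s))]
  rw [hadQ_lintegral s]
  exact had_finite s hs

lemma had_point (s t u : ℝ) (ht : 0 < t) (hu : 0 < u) :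
    Real.exp (-t) * (Real.exp (-u) * (((1 - Real.exp (-t)) / (1 - Real.exp (-t) * Real.exp (-u)))
      * (-Real.log (Real.exp (-t) * Real.exp (-u))) ^ s))
      = (1 - Real.exp (-t)) * hadH s (t + u) := by
  have hE : Real.exp (-t) * Real.exp (-u) = Real.exp (-(t+u)) := by
    rw [← Real.exp_add]; congr 1; ring
  rw [hE, Real.log_exp, neg_neg, hadH]
  linear_combination ((1 - Real.exp (-t)) * (t + u) ^ s / (1 - Real.exp (-(t + u)))) * hE

lemma had_indicator_Q (s t : ℝ) (ht : 0 < t) (v : ℝ) :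
    indicator (Ioi t) (fun v => (1 - Real.exp (-t)) * hadH s v) v = hadQ s (t, v) := by
  rw [hadQ]
  by_cases h : t < v
  · rw [indicator_of_mem (mem_Ioi.mpr h), if_pos ⟨ht, h⟩]
  · rw [indicator_of_notMem (by simpa using h), if_neg (fun hh => h hh.2)]

lemma had_Q_t_integral (s : ℝ) (v : ℝ) :
    (∫ t, hadQ s (t, v)) = indicator (Ioi 0) (fun v => v ^ s * hadPhi v) v := by
  by_cases hv : 0 < v
  · rw [indicator_of_mem (mem_Ioi.mpr hv)]
    have hfun : (fun t => hadQ s (t, v))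
        = indicator (Ioo 0 v) (fun t => (1 - Real.exp (-t)) * hadH s v) := by
      funext t
      rw [hadQ]
      by_cases h : 0 < t ∧ t < v
      · rw [if_pos h, indicator_of_mem (mem_Ioo.mpr h)]
      · rw [if_neg h, indicator_of_notMem (by simpa [mem_Ioo] using h)]
    rw [hfun, integral_indicator measurableSet_Ioo, had_t_integral s v hv]
  · rw [indicator_of_notMem (show v ∉ Ioi 0 from hv)]
    have hz : ∀ t, hadQ s (t, v) = 0 := by
      intro t
      rw [hadQ, if_neg]
      rintro ⟨h1, h2⟩
      exact hv (h1.trans h2)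
    simp [hz]

lemma had_L1 (s : ℝ) (hs : -2 < s) :
    (∫ x in (0:ℝ)..1, ∫ y in (0:ℝ)..1, ((1 - x) / (1 - x * y)) * (-Real.log (x * y)) ^ s)
      = ∫ v in Ioi (0:ℝ), v ^ s * hadPhi v := by
  have hQint : Integrable (Function.uncurry (fun t v => hadQ s (t, v))) (volume.prod volume) := by
    have h := hadQ_integrable s hs
    rwa [MeasureTheory.Measure.volume_eq_prod] at h
  rw [intervalIntegral.integral_of_le zero_le_one, integral_Ioc_eq_integral_Ioo,
    had_subst (fun x => ∫ y in (0:ℝ)..1, ((1 - x) / (1 - x * y)) * (-Real.log (x * y)) ^ s)]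
  have step3 : ∫ t in Ioi (0:ℝ), Real.exp (-t) * (∫ y in (0:ℝ)..1,
        ((1 - Real.exp (-t)) / (1 - Real.exp (-t) * y)) * (-Real.log (Real.exp (-t) * y)) ^ s)
      = ∫ t in Ioi (0:ℝ), ∫ v, hadQ s (t, v) := by
    refine setIntegral_congr_fun measurableSet_Ioi (fun t ht => ?_)
    have ht' : (0:ℝ) < t := ht
    rw [intervalIntegral.integral_of_le zero_le_one, integral_Ioc_eq_integral_Ioo,
      had_subst (fun y => ((1 - Real.exp (-t)) / (1 - Real.exp (-t) * y))
        * (-Real.log (Real.exp (-t) * y)) ^ s)]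
    rw [← integral_const_mul]
    rw [setIntegral_congr_fun measurableSet_Ioi (fun u hu => had_point s t u ht' hu)]
    rw [integral_const_mul, had_transl (hadH s) t, ← integral_const_mul,
      ← integral_indicator measurableSet_Ioi]
    exact integral_congr_ae (Filter.Eventually.of_forall (had_indicator_Q s t ht'))
  rw [step3]
  have step4 : ∫ t in Ioi (0:ℝ), ∫ v, hadQ s (t, v) = ∫ t, ∫ v, hadQ s (t, v) := by
    rw [← integral_indicator measurableSet_Ioi]
    refine integral_congr_ae (Filter.Eventually.of_forall (fun t => ?_))
    by_cases ht : 0 < t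
    · rw [indicator_of_mem (mem_Ioi.mpr ht)]
    · rw [indicator_of_notMem (show t ∉ Ioi 0 from ht)]
      have hz : ∀ v, hadQ s (t, v) = 0 := by
        intro v
        rw [hadQ, if_neg]
        rintro ⟨h1, h2⟩
        exact ht h1
      simp [hz]
  rw [step4, integral_integral_swap hQint]
  simp_rw [had_Q_t_integral s]
  rw [integral_indicator measurableSet_Ioi]

theorem hadjicostas_formula (s : ℝ) (hs : -2 < s) (hs1 : s ≠ -1) :
    (↑(∫ x in (0:ℝ)..1, ∫ y in (0:ℝ)..1,
        ((1 - x) / (1 - x * y)) * (-Real.log (x * y)) ^ s) : ℂ)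
      = Complex.Gamma (s + 2) * (riemannZeta (s + 2) - 1 / (s + 1)) := by
  have hL1 := had_L1 s hs
  have hre : (0:ℝ) < ((s:ℂ) + 2).re := by
    simp only [Complex.add_re, Complex.ofReal_re, Complex.re_ofNat]
    linarith
  have hne : (s:ℂ) + 2 ≠ 1 := by
    intro h
    have := congrArg Complex.re h
    simp only [Complex.add_re, Complex.ofReal_re, Complex.re_ofNat, Complex.one_re] at this
    apply hs1; linarith
  have key := had_key hre hne
  rw [show ((s:ℂ) + 2) - 1 = (s:ℂ) + 1 by ring] at key
  rw [hL1, had_L2 s, key]
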